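/- Let V and W be complex Hilbert spaces, A = A* ∈ End V, B ∈ Hom(W,V), and C = C* ∈ End W with C ≥ 0. Let M ∈ End(V ⊕ W) be the block operator M(v,w) = (Av + Bw, B*v + Cw) on the Hilbert space direct sum V ⊕ W. Then the following are equivalent: (1) M ≥ 0; (2) B(t·Id_W + C)⁻¹B* ≤ A for every t ∈ (0,∞); (3) the limit D = lim_{t↘0} B(t·Id_W + C)⁻¹B* exists in the strong operator topology and D ≤ A. -/

import Mathlib

open Complex Metric Filter Set ContinuousLinearMap

noncomputable section

variable {V W : Type*} [NormedAddCommGroup V] [InnerProductSpace ℂ V] [CompleteSpace V]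
  [NormedAddCommGroup W] [InnerProductSpace ℂ W] [CompleteSpace W]

/-- Loewner order on operators: `opLE S T` means `S ≤ T`. -/
def opLE (S T : V →L[ℂ] V) : Prop := ∀ v : V, 0 ≤ (T - S).reApplyInnerSelf v

/-- The block operator `(v, w) ↦ (Av + Bw, B'v + Cw)` on the Hilbert space
direct sum `V ⊕ W`. -/
def blockOp (A : V →L[ℂ] V) (B : W →L[ℂ] V) (B' : V →L[ℂ] W) (C : W →L[ℂ] W) :
    WithLp 2 (V × W) →L[ℂ] WithLp 2 (V × W) :=
  ((WithLp.prodContinuousLinearEquiv 2 ℂ V W).symm : V × W →L[ℂ] WithLp 2 (V × W)) ∘L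
    ((A.coprod B).prod (B'.coprod C)) ∘L
      ((WithLp.prodContinuousLinearEquiv 2 ℂ V W) : WithLp 2 (V × W) →L[ℂ] V × W)

open scoped ComplexInnerProductSpace

set_option maxHeartbeats 1000000
set_option synthInstance.maxHeartbeats 400000
set_option linter.unusedSectionVars false

namespace SchurAux


variable {V W : Type*} [NormedAddCommGroup V] [InnerProductSpace ℂ V] [CompleteSpace V]
  [NormedAddCommGroup W] [InnerProductSpace ℂ W] [CompleteSpace W]

lemma reApply_eq (T : V →L[ℂ] V) (v : V) : T.reApplyInnerSelf v = (⟪T v, v⟫).re := rfl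

lemma reApply_sub (S T : V →L[ℂ] V) (v : V) :
    (S - T).reApplyInnerSelf v = S.reApplyInnerSelf v - T.reApplyInnerSelf v := by
  simp [reApply_eq, ContinuousLinearMap.sub_apply, inner_sub_left]

lemma reApply_add (S T : V →L[ℂ] V) (v : V) :
    (S + T).reApplyInnerSelf v = S.reApplyInnerSelf v + T.reApplyInnerSelf v := by
  simp [reApply_eq, ContinuousLinearMap.add_apply, inner_add_left]

lemma reApply_smul (c : ℝ) (T : V →L[ℂ] V) (v : V) :
    (c • T).reApplyInnerSelf v = c * T.reApplyInnerSelf v := by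
  simp only [reApply_eq, ContinuousLinearMap.smul_apply]
  rw [RCLike.real_smul_eq_coe_smul (K:=ℂ), inner_smul_left, RCLike.conj_ofReal]
  simp [Complex.mul_re]

lemma smul_one_nonneg {t : ℝ} (ht : 0 ≤ t) : (0:W→L[ℂ]W) ≤ t • (1 : W →L[ℂ] W) := by
  rw [ContinuousLinearMap.nonneg_iff_isPositive]
  refine ⟨(show IsSelfAdjoint (t • (1 : W →L[ℂ] W)) by
    rw [IsSelfAdjoint, star_smul, star_trivial, star_one]).isSymmetric, fun w => ?_⟩
  simp only [ContinuousLinearMap.reApplyInnerSelf, ContinuousLinearMap.smul_apply,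
    ContinuousLinearMap.one_apply]
  rw [RCLike.real_smul_eq_coe_smul (K:=ℂ), inner_smul_left, RCLike.conj_ofReal,
    RCLike.re_ofReal_mul]
  exact mul_nonneg ht inner_self_nonneg

variable (C : W →L[ℂ] W)

lemma Ct_nonneg (hC0 : (0:W→L[ℂ]W) ≤ C) {t : ℝ} (ht : 0 ≤ t) :
    (0:W→L[ℂ]W) ≤ t • (1 : W →L[ℂ] W) + C :=
  le_trans (smul_one_nonneg ht) (le_add_of_nonneg_right hC0)

lemma Ct_unit (hC0 : (0:W→L[ℂ]W) ≤ C) {t : ℝ} (ht : 0 < t) :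
    IsUnit (t • (1 : W →L[ℂ] W) + C) := by
  have h1 : IsUnit (t • (1 : W →L[ℂ] W)) := by
    refine ⟨⟨t • 1, t⁻¹ • 1, ?_, ?_⟩, rfl⟩ <;>
      simp [smul_smul, mul_inv_cancel₀ ht.ne', inv_mul_cancel₀ ht.ne']
  exact CStarAlgebra.isUnit_of_le _ (le_add_of_nonneg_right hC0)
    (IsStrictlyPositive.iff_of_unital.mpr ⟨smul_one_nonneg ht.le, h1⟩)

lemma Rt_nonneg (hC0 : (0:W→L[ℂ]W) ≤ C) {t : ℝ} (ht : 0 < t) :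
    (0:W→L[ℂ]W) ≤ Ring.inverse (t • (1 : W →L[ℂ] W) + C) := by
  obtain ⟨u, hu'⟩ := Ct_unit C hC0 ht
  rw [← hu', Ring.inverse_unit]
  exact CFC.inv_nonneg_of_nonneg u (hu' ▸ Ct_nonneg C hC0 ht.le)

lemma Rt_antitone (hC0 : (0:W→L[ℂ]W) ≤ C) {s t : ℝ} (hs : 0 < s) (hst : s ≤ t) :
    Ring.inverse (t • (1 : W →L[ℂ] W) + C) ≤ Ring.inverse (s • (1 : W →L[ℂ] W) + C) := by
  obtain ⟨u, hu'⟩ := Ct_unit C hC0 hs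
  obtain ⟨u', hu''⟩ := Ct_unit C hC0 (hs.trans_le hst)
  rw [← hu', ← hu'', Ring.inverse_unit, Ring.inverse_unit]
  refine CStarAlgebra.inv_le_inv (hu' ▸ Ct_nonneg C hC0 hs.le) ?_
  rw [hu', hu'']
  have : (0:W→L[ℂ]W) ≤ (t - s) • (1 : W →L[ℂ] W) := smul_one_nonneg (by linarith)
  calc s • (1 : W →L[ℂ] W) + C ≤ (t - s) • (1 : W →L[ℂ] W) + (s • (1 : W →L[ℂ] W) + C) :=
        le_add_of_nonneg_left this
    _ = t • (1 : W →L[ℂ] W) + C := by rw [← add_assoc, ← add_smul]; ring_nf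

lemma mul_self_le_norm_smul {G : V →L[ℂ] V} (hG : (0:V→L[ℂ]V) ≤ G) :
    G * G ≤ ‖G‖ • G := by
  have hsa : IsSelfAdjoint G := .of_nonneg hG
  set s := CFC.sqrt G with hsdef
  have hs0 : (0:V→L[ℂ]V) ≤ s := CFC.sqrt_nonneg G
  have hss : s * s = G := CFC.sqrt_mul_sqrt_self G hG
  have h1 : G ≤ ‖G‖ • 1 := by
    simpa [Algebra.algebraMap_eq_smul_one] using hsa.le_algebraMap_norm_self
  have h2 := star_left_conjugate_le_conjugate h1 s
  rw [(IsSelfAdjoint.of_nonneg hs0).star_eq] at h2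
  calc G * G = s * G * s := by rw [← hss]; simp only [mul_assoc]
    _ ≤ s * (‖G‖ • 1) * s := h2
    _ = ‖G‖ • G := by rw [mul_smul_comm, mul_one, smul_mul_assoc, hss]

lemma norm_apply_sq_le {G : V →L[ℂ] V} (hG : (0:V→L[ℂ]V) ≤ G) (v : V) :
    ‖G v‖ ^ 2 ≤ ‖G‖ * G.reApplyInnerSelf v := by
  have h := (ContinuousLinearMap.le_def _ _).mp (mul_self_le_norm_smul hG)
  have h2 := h.2 v
  rw [reApply_sub, reApply_smul] at h2
  have hsa : IsSelfAdjoint G := .of_nonneg hG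
  have hsym := isSelfAdjoint_iff_isSymmetric.mp hsa
  have h3 : (G * G).reApplyInnerSelf v = ‖G v‖ ^ 2 := by
    rw [reApply_eq, ContinuousLinearMap.mul_apply]
    have h4 : ⟪G (G v), v⟫ = ⟪G v, G v⟫ := hsym (G v) v
    rw [h4]
    exact inner_self_eq_norm_sq (𝕜:=ℂ) (G v)
  linarith

lemma le_of_opLE {S T : V →L[ℂ] V} (hS : IsSelfAdjoint S) (hT : IsSelfAdjoint T)
    (h : ∀ v : V, 0 ≤ (T - S).reApplyInnerSelf v) : S ≤ T :=
  (ContinuousLinearMap.le_def _ _).mpr ⟨(hT.sub hS).isSymmetric, h⟩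



lemma re_inner_self (x : W) : (⟪x, x⟫).re = ‖x‖^2 := inner_self_eq_norm_sq (𝕜:=ℂ) x

lemma re_inner_smul_self (t : ℝ) (x : W) : (⟪t • x, x⟫).re = t * ‖x‖^2 := by
  rw [RCLike.real_smul_eq_coe_smul (K:=ℂ), inner_smul_left, RCLike.conj_ofReal]
  simp [Complex.mul_re, re_inner_self, ← Complex.ofReal_pow]

lemma re_inner_symm (x y : W) : (⟪x, y⟫).re = (⟪y, x⟫).re := by
  rw [← inner_conj_symm]
  exact Complex.conj_re _

def Fop (C : W →L[ℂ] W) (B : W →L[ℂ] V) (t : ℝ) : V →L[ℂ] V :=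
  B ∘L Ring.inverse (t • (1 : W →L[ℂ] W) + C) ∘L ContinuousLinearMap.adjoint B

lemma blockOp_reApply (A : V →L[ℂ] V) (B : W →L[ℂ] V) (B' : V →L[ℂ] W) (C : W →L[ℂ] W)
    (v : V) (w : W) :
    (blockOp A B B' C).reApplyInnerSelf ((WithLp.prodContinuousLinearEquiv 2 ℂ V W).symm (v, w))
    = (⟪A v + B w, v⟫).re + (⟪B' v + C w, w⟫).re := by
  simp [blockOp, ContinuousLinearMap.reApplyInnerSelf, WithLp.prod_inner_apply, inner_add_left]

lemma blockOp_reApply' (A : V →L[ℂ] V) (B : W →L[ℂ] V) (B' : V →L[ℂ] W) (C : W →L[ℂ] W)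
    (x : WithLp 2 (V × W)) :
    (blockOp A B B' C).reApplyInnerSelf x
    = (⟪A (WithLp.prodContinuousLinearEquiv 2 ℂ V W x).1
        + B (WithLp.prodContinuousLinearEquiv 2 ℂ V W x).2,
        (WithLp.prodContinuousLinearEquiv 2 ℂ V W x).1⟫).re
      + (⟪B' (WithLp.prodContinuousLinearEquiv 2 ℂ V W x).1
        + C (WithLp.prodContinuousLinearEquiv 2 ℂ V W x).2,
        (WithLp.prodContinuousLinearEquiv 2 ℂ V W x).2⟫).re := by
  have := blockOp_reApply A B B' C (WithLp.prodContinuousLinearEquiv 2 ℂ V W x).1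
    (WithLp.prodContinuousLinearEquiv 2 ℂ V W x).2
  have hx : (WithLp.prodContinuousLinearEquiv 2 ℂ V W).symm
      ((WithLp.prodContinuousLinearEquiv 2 ℂ V W x).1,
        (WithLp.prodContinuousLinearEquiv 2 ℂ V W x).2) = x := by
    rw [Prod.mk.eta]; exact ContinuousLinearEquiv.symm_apply_apply _ x
  rw [hx] at this
  simpa using this


variable {C : W →L[ℂ] W} {B : W →L[ℂ] V}

lemma Fop_isPositive {t : ℝ} (hR : (0:W→L[ℂ]W) ≤ Ring.inverse (t • (1 : W →L[ℂ] W) + C)) :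
    (Fop C B t).IsPositive :=
  ((ContinuousLinearMap.nonneg_iff_isPositive _).mp hR).conj_adjoint B

lemma Fop_reApply (t : ℝ) (v : V) :
    (Fop C B t).reApplyInnerSelf v
    = (Ring.inverse (t • (1 : W →L[ℂ] W) + C)).reApplyInnerSelf
        (ContinuousLinearMap.adjoint B v) := by
  rw [reApply_eq, reApply_eq]
  show (⟪B ((Ring.inverse (t • (1 : W →L[ℂ] W) + C)) (ContinuousLinearMap.adjoint B v)), v⟫).re
    = _
  rw [← ContinuousLinearMap.adjoint_inner_right]


lemma Fop_mono (hC0 : (0:W→L[ℂ]W) ≤ C) {s t : ℝ} (hs : 0 < s) (hst : s ≤ t) :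
    Fop C B t ≤ Fop C B s := by
  have hps := Fop_isPositive (B := B) (Rt_nonneg C hC0 hs)
  have hpt := Fop_isPositive (B := B) (Rt_nonneg C hC0 (hs.trans_le hst))
  have h := (ContinuousLinearMap.le_def _ _).mp (Rt_antitone C hC0 hs hst)
  refine le_of_opLE hpt.isSelfAdjoint hps.isSelfAdjoint fun v => ?_
  rw [reApply_sub, Fop_reApply, Fop_reApply, ← reApply_sub]
  exact h.2 _

lemma Fop_nonneg (hC0 : (0:W→L[ℂ]W) ≤ C) {t : ℝ} (ht : 0 < t) :
    (0:V→L[ℂ]V) ≤ Fop C B t :=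
  (ContinuousLinearMap.nonneg_iff_isPositive _).mpr (Fop_isPositive (Rt_nonneg C hC0 ht))


lemma part1_forward {A : V →L[ℂ] V}
    (hC0 : (0:W→L[ℂ]W) ≤ C)
    (hM : ∀ x : WithLp 2 (V × W),
      0 ≤ (blockOp A B (ContinuousLinearMap.adjoint B) C).reApplyInnerSelf x)
    {t : ℝ} (ht : 0 < t) (v : V) : 0 ≤ (A - Fop C B t).reApplyInnerSelf v := by
  have hu := Ct_unit C hC0 ht
  set R := Ring.inverse (t • (1 : W →L[ℂ] W) + C) with hRdef
  set u := ContinuousLinearMap.adjoint B v with hu'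
  have h0 := hM ((WithLp.prodContinuousLinearEquiv 2 ℂ V W).symm (v, -(R u)))
  rw [blockOp_reApply] at h0
  rw [← hu'] at h0
  have h1 : ((t • (1 : W →L[ℂ] W) + C) * R) u = (1 : W →L[ℂ] W) u := by
    rw [Ring.mul_inverse_cancel _ hu]
  simp only [ContinuousLinearMap.mul_apply, ContinuousLinearMap.add_apply,
    ContinuousLinearMap.smul_apply, ContinuousLinearMap.one_apply] at h1
  have hCR : u - C (R u) = t • R u := sub_eq_iff_eq_add.mpr h1.symm
  have e1 : ⟪A v + B (-(R u)), v⟫ = ⟪A v, v⟫ - ⟪R u, u⟫ := by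
    rw [inner_add_left, map_neg, inner_neg_left,
      ← ContinuousLinearMap.adjoint_inner_right B (R u) v, ← hu', ← sub_eq_add_neg]
  have e2 : ⟪u + C (-(R u)), -(R u)⟫ = -⟪t • R u, R u⟫ := by
    rw [map_neg, inner_neg_right, ← sub_eq_add_neg, hCR]
  rw [e1, e2] at h0
  have hn : (⟪t • R u, R u⟫).re = t * ‖R u‖^2 := re_inner_smul_self t (R u)
  have eF : (Fop C B t).reApplyInnerSelf v = (⟪R u, u⟫).re := by
    rw [Fop_reApply (B:=B) t v, reApply_eq (V:=W)]
  rw [reApply_sub, reApply_eq, eF]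
  rw [Complex.sub_re, Complex.neg_re, hn] at h0
  nlinarith [sq_nonneg (‖R u‖), ht]


lemma part1_backward {A : V →L[ℂ] V} (hC : IsSelfAdjoint C) (hC0 : (0:W→L[ℂ]W) ≤ C)
    (h2 : ∀ t : ℝ, 0 < t → ∀ v : V, 0 ≤ (A - Fop C B t).reApplyInnerSelf v)
    (x : WithLp 2 (V × W)) :
    0 ≤ (blockOp A B (ContinuousLinearMap.adjoint B) C).reApplyInnerSelf x := by
  rw [blockOp_reApply']
  set v := (WithLp.prodContinuousLinearEquiv 2 ℂ V W x).1 with hv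
  set w := (WithLp.prodContinuousLinearEquiv 2 ℂ V W x).2 with hw
  set u := ContinuousLinearMap.adjoint B v with hu'
  have e4 : ⟪A v + B w, v⟫ = ⟪A v, v⟫ + ⟪w, u⟫ := by
    rw [inner_add_left, ← ContinuousLinearMap.adjoint_inner_right B w v, ← hu']
  have e5 : ⟪u + C w, w⟫ = ⟪u, w⟫ + ⟪C w, w⟫ := inner_add_left _ _ _
  rw [e4, e5, Complex.add_re, Complex.add_re]
  have key : ∀ t : ℝ, 0 < t →
      0 ≤ ((⟪A v, v⟫).re + (⟪w, u⟫).re) + ((⟪u, w⟫).re + (⟪C w, w⟫).re) + t * ‖w‖^2 := by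
    intro t ht
    have hu2 := Ct_unit C hC0 ht
    set R := Ring.inverse (t • (1 : W →L[ℂ] W) + C) with hRdef
    have hCtR : (t • (1 : W →L[ℂ] W) + C) (R u) = u := by
      have h1 : ((t • (1 : W →L[ℂ] W) + C) * R) u = (1 : W →L[ℂ] W) u := by
        rw [Ring.mul_inverse_cancel _ hu2]
      simpa using h1
    have hCtsa : IsSelfAdjoint (t • (1 : W →L[ℂ] W) + C) := by
      refine IsSelfAdjoint.add ?_ hC
      rw [IsSelfAdjoint, star_smul, star_trivial, star_one]
    have hsym := isSelfAdjoint_iff_isSymmetric.mp hCtsa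
    set y := w + R u with hy
    have hCty : 0 ≤ (⟪(t • (1 : W →L[ℂ] W) + C) y, y⟫).re :=
      ((ContinuousLinearMap.nonneg_iff_isPositive _).mp (Ct_nonneg C hC0 ht.le)).2 y
    have e3 : (t • (1 : W →L[ℂ] W) + C) y = (t • (1 : W →L[ℂ] W) + C) w + u := by
      rw [hy, map_add, hCtR]
    have e6 : ⟪(t • (1 : W →L[ℂ] W) + C) y, y⟫
        = ⟪(t • (1 : W →L[ℂ] W) + C) w, w⟫ + ⟪w, u⟫ + ⟪u, w⟫ + ⟪u, R u⟫ := by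
      rw [e3, hy, inner_add_left, inner_add_right, inner_add_right]
      have e7 : ⟪(t • (1 : W →L[ℂ] W) + C) w, R u⟫ = ⟪w, u⟫ := by
        have := hsym w (R u)
        rw [show (⟪(t • (1 : W →L[ℂ] W) + C) w, R u⟫ : ℂ)
            = ⟪w, (t • (1 : W →L[ℂ] W) + C) (R u)⟫ from this, hCtR]
      rw [e7]
      ring
    have e8 : (⟪(t • (1 : W →L[ℂ] W) + C) w, w⟫).re = t * ‖w‖^2 + (⟪C w, w⟫).re := by
      rw [ContinuousLinearMap.add_apply, ContinuousLinearMap.smul_apply,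
        ContinuousLinearMap.one_apply, inner_add_left, Complex.add_re, re_inner_smul_self]
    have h2t := h2 t ht v
    have eF : (Fop C B t).reApplyInnerSelf v = (⟪R u, u⟫).re := by
      rw [Fop_reApply (B:=B) t v, reApply_eq (V:=W)]
    rw [reApply_sub, reApply_eq, eF] at h2t
    have hswap : (⟪u, R u⟫).re = (⟪R u, u⟫).re := re_inner_symm u (R u)
    rw [e6] at hCty
    rw [Complex.add_re, Complex.add_re, Complex.add_re, e8] at hCty
    linarith
  set E := ((⟪A v, v⟫).re + (⟪w, u⟫).re) + ((⟪u, w⟫).re + (⟪C w, w⟫).re) with hE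
  refine le_of_forall_pos_le_add fun ε hε => ?_
  have hq : (0:ℝ) ≤ ‖w‖^2 := sq_nonneg _
  have ht : 0 < ε / (‖w‖^2 + 1) := by positivity
  have hk := key _ ht
  have hle : (ε / (‖w‖^2 + 1)) * ‖w‖^2 ≤ ε := by
    rw [div_mul_eq_mul_div, div_le_iff₀ (by linarith)]
    nlinarith
  linarith


lemma part2_exists {A : V →L[ℂ] V} (hA : IsSelfAdjoint A) (hC0 : (0:W→L[ℂ]W) ≤ C)
    (h2 : ∀ t : ℝ, 0 < t → ∀ v : V, 0 ≤ (A - Fop C B t).reApplyInnerSelf v) :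
    ∃ D : V →L[ℂ] V,
      (∀ v : V, Tendsto (fun t : ℝ => Fop C B t v) (nhdsWithin 0 (Ioi (0:ℝ))) (nhds (D v))) ∧
      ∀ v : V, 0 ≤ (A - D).reApplyInnerSelf v := by
  have hFpos : ∀ t : ℝ, 0 < t → (Fop C B t).IsPositive :=
    fun t ht => Fop_isPositive (Rt_nonneg C hC0 ht)
  have hF0 : ∀ t : ℝ, 0 < t → (0:V→L[ℂ]V) ≤ Fop C B t := fun t ht => Fop_nonneg hC0 ht
  have hFA : ∀ t : ℝ, 0 < t → Fop C B t ≤ A :=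
    fun t ht => le_of_opLE (hFpos t ht).isSelfAdjoint hA (h2 t ht)
  set g : V → ℝ → ℝ := fun v t => (Fop C B t).reApplyInnerSelf v with hg
  have hg_anti : ∀ v : V, AntitoneOn (g v) (Ioi (0:ℝ)) := by
    intro v s hs t ht hst
    have h := ((ContinuousLinearMap.le_def _ _).mp (Fop_mono (B:=B) hC0 hs hst)).2 v
    rw [reApply_sub] at h
    simp only [hg]
    linarith
  have hg_bdd : ∀ v : V, BddAbove (g v '' Ioi (0:ℝ)) := by
    intro v
    refine ⟨A.reApplyInnerSelf v, ?_⟩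
    rintro _ ⟨t, ht, rfl⟩
    have := h2 t ht v
    rw [reApply_sub] at this
    simp only [hg]
    linarith
  have hg_tendsto : ∀ v : V, Tendsto (g v) (nhdsWithin 0 (Ioi (0:ℝ)))
      (nhds (sSup (g v '' Ioi (0:ℝ)))) :=
    fun v => AntitoneOn.tendsto_nhdsGT (hg_anti v) (hg_bdd v)
  -- distance bound
  have hdist : ∀ v : V, ∀ s t : ℝ, 0 < s → 0 < t → s ≤ t →
      dist (Fop C B s v) (Fop C B t v) ≤ Real.sqrt (‖A‖ * |g v s - g v t|) := by
    intro v s t hs ht hst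
    have hGpos : (0:V→L[ℂ]V) ≤ Fop C B s - Fop C B t := by
      rw [ContinuousLinearMap.nonneg_iff_isPositive]
      simpa using (ContinuousLinearMap.le_def _ _).mp (Fop_mono (B:=B) hC0 hs hst)
    have hGsa : IsSelfAdjoint (Fop C B s - Fop C B t) :=
      (hFpos s hs).isSelfAdjoint.sub (hFpos t ht).isSelfAdjoint
    have hGA : Fop C B s - Fop C B t ≤ A := by
      refine le_of_opLE hGsa hA fun x => ?_
      rw [reApply_sub, reApply_sub]
      have h1 := h2 s hs x
      rw [reApply_sub] at h1
      have h3 := (hFpos t ht).2 x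
      linarith
    have hnormG : ‖Fop C B s - Fop C B t‖ ≤ ‖A‖ :=
      CStarAlgebra.norm_le_norm_of_nonneg_of_le hGpos hGA
    have hb := norm_apply_sq_le hGpos v
    have hre : (Fop C B s - Fop C B t).reApplyInnerSelf v = g v s - g v t := reApply_sub _ _ v
    have hge : 0 ≤ g v s - g v t := by
      have := ((ContinuousLinearMap.le_def _ _).mp (Fop_mono (B:=B) hC0 hs hst)).2 v
      rw [reApply_sub] at this
      linarith
    rw [dist_eq_norm, ← ContinuousLinearMap.sub_apply]
    refine Real.le_sqrt_of_sq_le ?_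
    calc ‖(Fop C B s - Fop C B t) v‖ ^ 2
        ≤ ‖Fop C B s - Fop C B t‖ * (Fop C B s - Fop C B t).reApplyInnerSelf v := hb
      _ ≤ ‖A‖ * |g v s - g v t| := by
          rw [hre, _root_.abs_of_nonneg hge]
          exact mul_le_mul_of_nonneg_right hnormG hge
  have hdist' : ∀ v : V, ∀ s t : ℝ, 0 < s → 0 < t →
      dist (Fop C B s v) (Fop C B t v) ≤ Real.sqrt (‖A‖ * |g v s - g v t|) := by
    intro v s t hs ht
    rcases le_total s t with h | h
    · exact hdist v s t hs ht h
    · rw [dist_comm, abs_sub_comm]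
      exact hdist v t s ht hs h
  -- Cauchy
  have hlim : ∀ v : V, ∃ y : V,
      Tendsto (fun t : ℝ => Fop C B t v) (nhdsWithin 0 (Ioi (0:ℝ))) (nhds y) := by
    intro v
    set l := nhdsWithin (0:ℝ) (Ioi (0:ℝ)) with hl
    have habs : Tendsto (fun p : ℝ × ℝ => |g v p.1 - g v p.2|) (l ×ˢ l) (nhds 0) := by
      have h1 := ((hg_tendsto v).comp tendsto_fst).sub ((hg_tendsto v).comp tendsto_snd)
      simp only [sub_self] at h1
      simpa using h1.abs
    have hsq : Tendsto (fun p : ℝ × ℝ => Real.sqrt (‖A‖ * |g v p.1 - g v p.2|)) (l ×ˢ l)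
        (nhds 0) := by
      have := (habs.const_mul ‖A‖).sqrt
      simpa using this
    have hev : ∀ᶠ p : ℝ × ℝ in l ×ˢ l,
        dist (Fop C B p.1 v) (Fop C B p.2 v) ≤ Real.sqrt (‖A‖ * |g v p.1 - g v p.2|) := by
      filter_upwards [(eventually_mem_nhdsWithin (a := (0:ℝ)) (s := Ioi (0:ℝ))).prod_inl l,
        (eventually_mem_nhdsWithin (a := (0:ℝ)) (s := Ioi (0:ℝ))).prod_inr l] with p hp1 hp2
      exact hdist' v p.1 p.2 hp1 hp2
    have hd0 : Tendsto (fun p : ℝ × ℝ => dist (Fop C B p.1 v) (Fop C B p.2 v)) (l ×ˢ l)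
        (nhds 0) :=
      squeeze_zero' (Eventually.of_forall fun p => dist_nonneg) hev hsq
    have hc : Cauchy (Filter.map (fun t : ℝ => Fop C B t v) l) := by
      rw [cauchy_map_iff]
      exact ⟨inferInstance, tendsto_uniformity_iff_dist_tendsto_zero.mpr hd0⟩
    exact CompleteSpace.complete hc
  choose φ hφ using hlim
  have hl_ne : (nhdsWithin (0:ℝ) (Ioi (0:ℝ))).NeBot := inferInstance
  have hadd : ∀ v w : V, φ (v + w) = φ v + φ w := by
    intro v w
    refine tendsto_nhds_unique (hφ (v + w)) ?_
    have := (hφ v).add (hφ w)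
    refine this.congr fun t => ?_
    rw [← map_add]
  have hsmul : ∀ (c : ℂ) (v : V), φ (c • v) = c • φ v := by
    intro c v
    refine tendsto_nhds_unique (hφ (c • v)) ?_
    have := (hφ v).const_smul c
    refine this.congr fun t => ?_
    rw [← map_smul]
  have hbound : ∀ v : V, ‖φ v‖ ≤ ‖A‖ * ‖v‖ := by
    intro v
    refine le_of_tendsto (hφ v).norm ?_
    filter_upwards [eventually_mem_nhdsWithin (a := (0:ℝ)) (s := Ioi (0:ℝ))] with t ht
    calc ‖Fop C B t v‖ ≤ ‖Fop C B t‖ * ‖v‖ := (Fop C B t).le_opNorm v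
      _ ≤ ‖A‖ * ‖v‖ := by
          refine mul_le_mul_of_nonneg_right ?_ (norm_nonneg v)
          exact CStarAlgebra.norm_le_norm_of_nonneg_of_le (hF0 t ht) (hFA t ht)
  set D : V →L[ℂ] V := LinearMap.mkContinuous
    { toFun := φ, map_add' := hadd, map_smul' := hsmul } ‖A‖ hbound with hD
  refine ⟨D, fun v => hφ v, fun v => ?_⟩
  have hDv : ∀ v : V, D v = φ v := fun _ => rfl
  rw [reApply_sub, reApply_eq, reApply_eq, hDv]
  have hre_t : Tendsto (fun t : ℝ => (⟪Fop C B t v, v⟫).re) (nhdsWithin 0 (Ioi (0:ℝ)))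
      (nhds ((⟪φ v, v⟫).re)) := by
    have h1 : Tendsto (fun t : ℝ => (⟪Fop C B t v, v⟫ : ℂ)) (nhdsWithin 0 (Ioi (0:ℝ)))
        (nhds (⟪φ v, v⟫ : ℂ)) := (hφ v).inner tendsto_const_nhds
    exact (Complex.continuous_re.tendsto _).comp h1
  have hle : ∀ᶠ t : ℝ in nhdsWithin 0 (Ioi (0:ℝ)),
      (⟪Fop C B t v, v⟫).re ≤ (⟪A v, v⟫).re := by
    filter_upwards [eventually_mem_nhdsWithin (a := (0:ℝ)) (s := Ioi (0:ℝ))] with t ht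
    have := h2 t ht v
    rw [reApply_sub, reApply_eq, reApply_eq] at this
    linarith
  have := le_of_tendsto hre_t hle
  linarith


lemma part2_backward {A D : V →L[ℂ] V} (hC0 : (0:W→L[ℂ]W) ≤ C)
    (hD : ∀ v : V, Tendsto (fun t : ℝ => Fop C B t v) (nhdsWithin 0 (Ioi (0:ℝ))) (nhds (D v)))
    (hDA : ∀ v : V, 0 ≤ (A - D).reApplyInnerSelf v) :
    ∀ t : ℝ, 0 < t → ∀ v : V, 0 ≤ (A - Fop C B t).reApplyInnerSelf v := by
  intro t ht v
  have hre_t : Tendsto (fun s : ℝ => (⟪Fop C B s v, v⟫).re) (nhdsWithin 0 (Ioi (0:ℝ)))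
      (nhds ((⟪D v, v⟫).re)) := by
    have h1 : Tendsto (fun s : ℝ => (⟪Fop C B s v, v⟫ : ℂ)) (nhdsWithin 0 (Ioi (0:ℝ)))
        (nhds (⟪D v, v⟫ : ℂ)) := (hD v).inner tendsto_const_nhds
    exact (Complex.continuous_re.tendsto _).comp h1
  have hev : ∀ᶠ s : ℝ in nhdsWithin 0 (Ioi (0:ℝ)),
      (⟪Fop C B t v, v⟫).re ≤ (⟪Fop C B s v, v⟫).re := by
    filter_upwards [Ioo_mem_nhdsGT_of_mem (⟨le_rfl, ht⟩ : (0:ℝ) ∈ Ico 0 t)] with s hs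
    have h := ((ContinuousLinearMap.le_def _ _).mp (Fop_mono (B:=B) hC0 hs.1 hs.2.le)).2 v
    rw [reApply_sub, reApply_eq, reApply_eq] at h
    linarith
  have h1 := ge_of_tendsto hre_t hev
  have h2 := hDA v
  rw [reApply_sub, reApply_eq, reApply_eq] at h2 ⊢
  linarith

end SchurAux

/-- Lemma 4.3, Schur complements: for `A = A*`, `B`, and
`C = C* ≥ 0`, positivity of the block operator `[[A, B], [B*, C]]` is equivalent
to `B(t·Id + C)⁻¹B* ≤ A` for all `t > 0`, and also to the existence of the
strong-operator-topology limit `D = lim_{t↘0} B(t·Id + C)⁻¹B*` with `D ≤ A`. -/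
theorem schur_complement_positivity
    (A : V →L[ℂ] V) (hA : IsSelfAdjoint A)
    (B : W →L[ℂ] V)
    (C : W →L[ℂ] W) (hC : IsSelfAdjoint C)
    (hC0 : ∀ w : W, 0 ≤ C.reApplyInnerSelf w) :
    ((∀ x : WithLp 2 (V × W),
        0 ≤ (blockOp A B (ContinuousLinearMap.adjoint B) C).reApplyInnerSelf x) ↔
      (∀ t : ℝ, 0 < t →
        opLE (B ∘L Ring.inverse (t • (1 : W →L[ℂ] W) + C) ∘L
          ContinuousLinearMap.adjoint B) A)) ∧
    ((∀ x : WithLp 2 (V × W),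
        0 ≤ (blockOp A B (ContinuousLinearMap.adjoint B) C).reApplyInnerSelf x) ↔
      (∃ D : V →L[ℂ] V,
        (∀ v : V, Tendsto
          (fun t : ℝ => (B ∘L Ring.inverse (t • (1 : W →L[ℂ] W) + C) ∘L
            ContinuousLinearMap.adjoint B) v)
          (nhdsWithin 0 (Ioi (0 : ℝ))) (nhds (D v))) ∧
        opLE D A)) := by
  have hC0' : (0:W→L[ℂ]W) ≤ C := (ContinuousLinearMap.nonneg_iff_isPositive C).mpr ⟨hC.isSymmetric, hC0⟩
  constructor
  · constructor
    · intro hM t ht v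
      exact SchurAux.part1_forward hC0' hM ht v
    · intro h2
      exact SchurAux.part1_backward hC hC0' (fun t ht v => h2 t ht v)
  · constructor
    · intro hM
      obtain ⟨D, hD, hDA⟩ := SchurAux.part2_exists hA hC0'
        (fun t ht => SchurAux.part1_forward hC0' hM ht)
      exact ⟨D, hD, hDA⟩
    · rintro ⟨D, hD, hDA⟩
      exact SchurAux.part1_backward hC hC0' (SchurAux.part2_backward hC0' hD hDA)
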